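/- Let 0 < α < 1 and let u : ℝ → ℝ be a C² 2π-periodic function which is not constant, with amplitude V = max u − min u > 0. Then there is a constant c₁ > 0 depending only on α such that for every x ∈ ℝ: D_α u'(x) = ∫_ℝ |u'(x) − u'(x+z)|² |z|^{−(1+α)} dz ≥ c₁ |u'(x)|^{2+α} / V^α. -/

import Mathlib

open Real MeasureTheory

/-- Commutator (alignment) forcing `T(ρ,u)(x) = ∫ ρ(x+z)(u(x+z)-u(x))|z|^{-(1+α)} dz`. -/
noncomputable def commT (α : ℝ) (ρ u : ℝ → ℝ) (x : ℝ) : ℝ :=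
  ∫ z : ℝ, ρ (x + z) * (u (x + z) - u x) / |z| ^ (1 + α)

/-- Fractional Laplacian `Λ^α f(x) = ∫ (f(x) - f(x+z))|z|^{-(1+α)} dz`. -/
noncomputable def fracLap (α : ℝ) (f : ℝ → ℝ) (x : ℝ) : ℝ :=
  ∫ z : ℝ, (f x - f (x + z)) / |z| ^ (1 + α)

/-- Dissipation functional `D_α g(x) = ∫ |g(x) - g(x+z)|² |z|^{-(1+α)} dz`. -/
noncomputable def dissip (α : ℝ) (g : ℝ → ℝ) (x : ℝ) : ℝ :=
  ∫ z : ℝ, (g x - g (x + z)) ^ 2 / |z| ^ (1 + α)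

/-- The fractional Euler alignment system holds at the point `(x,t)`:
`ρ_t + (ρu)_x = 0` and `u_t + u u_x = T(ρ,u)`. -/
def IsEulerAlignSol (α : ℝ) (ρ u : ℝ → ℝ → ℝ) (x t : ℝ) : Prop :=
  deriv (fun s => ρ x s) t + deriv (fun y => ρ y t * u y t) x = 0 ∧
  deriv (fun s => u x s) t + u x t * deriv (fun y => u y t) x
    = commT α (fun y => ρ y t) (fun y => u y t) x


section Helpers
open Real MeasureTheory Set


lemma per_deriv {u : ℝ → ℝ} (hp : Function.Periodic u (2*π)) :
    Function.Periodic (deriv u) (2*π) := by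
  intro y
  have h : (fun t => u (t + 2*π)) = u := funext hp
  calc deriv u (y + 2*π) = deriv (fun t => u (t + 2*π)) y :=
        (deriv_comp_add_const u (2*π) y).symm
    _ = deriv u y := by rw [h]

lemma bdd_per {g : ℝ → ℝ} (hg : Continuous g) (hp : Function.Periodic g (2*π)) :
    ∃ C : ℝ, 0 ≤ C ∧ ∀ y, |g y| ≤ C := by
  have hpa : Function.Periodic (fun y => |g y|) (2*π) := fun y => by simp [hp y]
  have himg : (fun y => |g y|) '' Icc 0 (0 + 2*π) = Set.range (fun y => |g y|) :=
    hpa.image_Icc Real.two_pi_pos 0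
  have hcomp : IsCompact ((fun y => |g y|) '' Icc 0 (0 + 2*π)) :=
    isCompact_Icc.image hg.abs
  have hbdd : BddAbove (Set.range (fun y => |g y|)) := himg ▸ hcomp.bddAbove
  obtain ⟨C, hC⟩ := hbdd
  exact ⟨C, le_trans (abs_nonneg _) (hC (mem_range_self 0)), fun y => hC (mem_range_self y)⟩

lemma amp_bound {u : ℝ → ℝ} (hu : Continuous u) (hp : Function.Periodic u (2*π)) :
    ∀ a b : ℝ, u a - u b ≤ sSup (Set.range u) - sInf (Set.range u) := by
  have himg : u '' Icc 0 (0 + 2*π) = Set.range u := hp.image_Icc Real.two_pi_pos 0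
  have hcomp : IsCompact (u '' Icc 0 (0 + 2*π)) := isCompact_Icc.image hu
  have hba : BddAbove (Set.range u) := himg ▸ hcomp.bddAbove
  have hbb : BddBelow (Set.range u) := himg ▸ hcomp.bddBelow
  intro a b
  have h1 : u a ≤ sSup (Set.range u) := le_csSup hba (mem_range_self a)
  have h2 : sInf (Set.range u) ≤ u b := csInf_le hbb (mem_range_self b)
  linarith


lemma dissip_integrable (α : ℝ) (hα₀ : 0 < α) (hα₁ : α < 1)
    {k : ℝ → ℝ} (hk : Continuous k) {C L : ℝ}
    (hbC : ∀ y, |k y| ≤ C) (hbL : ∀ z, |k 0 - k z| ≤ L * |z|) :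
    Integrable (fun z => (k 0 - k z) ^ 2 / |z| ^ (1+α)) := by
  set F : ℝ → ℝ := fun z => (k 0 - k z) ^ 2 / |z| ^ (1+α) with hF
  have hC0 : 0 ≤ C := le_trans (abs_nonneg _) (hbC 0)
  have hL0 : 0 ≤ L := by
    have h := hbL 1
    simp only [abs_one, mul_one] at h
    linarith [abs_nonneg (k 0 - k 1)]
  have hFmeas : AEStronglyMeasurable F volume := by
    apply Measurable.aestronglyMeasurable
    exact ((continuous_const.sub hk).measurable.pow_const 2).div
      (continuous_abs.rpow_const (fun x => Or.inr (by linarith))).measurable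
  have hFnonneg : ∀ z, 0 ≤ F z := fun z =>
    div_nonneg (sq_nonneg _) (Real.rpow_nonneg (abs_nonneg z) _)
  -- bound on tails
  have htail : ∀ z : ℝ, 1 < |z| → F z ≤ 4 * C ^ 2 * |z| ^ (-(1+α)) := by
    intro z hz
    have hzpos : (0:ℝ) < |z| := lt_trans one_pos hz
    have h1 : (k 0 - k z) ^ 2 ≤ (2*C) ^ 2 := by
      have : |k 0 - k z| ≤ 2 * C := by
        have := abs_sub (k 0) (k z)
        calc |k 0 - k z| ≤ |k 0| + |k z| := abs_sub _ _
          _ ≤ 2 * C := by linarith [hbC 0, hbC z]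
      calc (k 0 - k z) ^ 2 = |k 0 - k z| ^ 2 := (sq_abs _).symm
        _ ≤ (2*C) ^ 2 := by
            exact pow_le_pow_left₀ (abs_nonneg _) this 2
    have h2 : F z ≤ (2*C)^2 / |z| ^ (1+α) := by
      exact div_le_div_of_nonneg_right h1 (Real.rpow_nonneg (abs_nonneg z) _)
    calc F z ≤ (2*C)^2 / |z| ^ (1+α) := h2
      _ = 4 * C^2 * |z| ^ (-(1+α)) := by
          rw [Real.rpow_neg (abs_nonneg z), div_eq_mul_inv]; ring
  -- bound near zero
  have hnear : ∀ z : ℝ, |z| ≤ 1 → F z ≤ L ^ 2 := by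
    intro z hz1
    rcases eq_or_ne z 0 with rfl | hz
    · simp [hF]; positivity
    · have hzpos : (0:ℝ) < |z| := abs_pos.2 hz
      have h1 : (k 0 - k z) ^ 2 ≤ (L * |z|) ^ 2 := by
        calc (k 0 - k z) ^ 2 = |k 0 - k z| ^ 2 := (sq_abs _).symm
          _ ≤ (L * |z|) ^ 2 := pow_le_pow_left₀ (abs_nonneg _) (hbL z) 2
      have h2 : F z ≤ (L * |z|) ^ 2 / |z| ^ (1+α) :=
        div_le_div_of_nonneg_right h1 (Real.rpow_nonneg (abs_nonneg z) _)
      have h3 : (L * |z|) ^ 2 / |z| ^ (1+α) = L^2 * |z| ^ (1 - α) := by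
        rw [mul_pow, ← Real.rpow_natCast |z| 2, mul_div_assoc,
          ← Real.rpow_sub hzpos]
        have he : ((2:ℕ):ℝ) - (1+α) = 1 - α := by push_cast; ring
        rw [he]
      have h4 : |z| ^ (1 - α) ≤ 1 :=
        Real.rpow_le_one (abs_nonneg z) hz1 (by linarith)
      calc F z ≤ L^2 * |z| ^ (1-α) := h3 ▸ h2
        _ ≤ L^2 * 1 := by nlinarith [sq_nonneg L]
        _ = L^2 := mul_one _
  -- integrability pieces
  have hIcc : IntegrableOn F (Icc (-1) 1) := by
    refine Integrable.mono' (g := fun _ => L^2) ((integrableOn_const_iff).mpr (Or.inr measure_Icc_lt_top))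
      hFmeas.restrict ?_
    refine (ae_restrict_iff' measurableSet_Icc).mpr (ae_of_all _ fun z hz => ?_)
    rw [Real.norm_eq_abs, abs_of_nonneg (hFnonneg z)]
    exact hnear z (abs_le.mpr ⟨hz.1, hz.2⟩)
  have hB : IntegrableOn (fun z : ℝ => 4 * C^2 * |z| ^ (-(1+α))) (Ioi 1) := by
    have hBB : IntegrableOn (fun z : ℝ => 4 * C^2 * z ^ (-(1+α))) (Ioi 1) :=
      (integrableOn_Ioi_rpow_of_lt (show -(1+α) < -1 by linarith) one_pos).const_mul (4*C^2)
    refine hBB.congr_fun (fun z hz => ?_) measurableSet_Ioi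
    rw [abs_of_pos (lt_trans one_pos hz)]
  have hIoi : IntegrableOn F (Ioi 1) := by
    refine Integrable.mono' hB hFmeas.restrict ?_
    refine (ae_restrict_iff' measurableSet_Ioi).mpr (ae_of_all _ fun z hz => ?_)
    rw [Real.norm_eq_abs, abs_of_nonneg (hFnonneg z)]
    exact htail z (by rw [abs_of_pos (lt_trans one_pos hz)]; exact hz)
  have hBneg : IntegrableOn (fun z : ℝ => 4 * C^2 * |z| ^ (-(1+α))) (Iio (-1)) := by
    set B : ℝ → ℝ := fun z => 4 * C^2 * |z| ^ (-(1+α)) with hBdef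
    have h1 : Integrable ((Ioi (1:ℝ)).indicator B) volume :=
      (integrable_indicator_iff measurableSet_Ioi).mpr hB
    have h2 : Integrable (fun t => (Ioi (1:ℝ)).indicator B (-t)) volume := h1.comp_neg
    have h3 : (fun t => (Ioi (1:ℝ)).indicator B (-t)) = (Iio (-1:ℝ)).indicator B := by
      funext t
      by_cases ht : t < -1
      · have h4 : -t ∈ Ioi (1:ℝ) := by simp [Set.mem_Ioi]; linarith
        rw [Set.indicator_of_mem h4, Set.indicator_of_mem (Set.mem_Iio.mpr ht)]
        simp [hBdef, abs_neg]
      · have h4 : -t ∉ Ioi (1:ℝ) := by simp [Set.mem_Ioi]; linarith [not_lt.mp ht]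
        rw [Set.indicator_of_notMem h4, Set.indicator_of_notMem (by simpa using ht)]
    rw [h3] at h2
    exact (integrable_indicator_iff measurableSet_Iio).mp h2
  have hIio : IntegrableOn F (Iio (-1)) := by
    refine Integrable.mono' hBneg hFmeas.restrict ?_
    refine (ae_restrict_iff' measurableSet_Iio).mpr (ae_of_all _ fun z hz => ?_)
    rw [Real.norm_eq_abs, abs_of_nonneg (hFnonneg z)]
    refine htail z ?_
    rw [Set.mem_Iio] at hz
    rw [abs_of_neg (by linarith)]; linarith
  have huniv : (univ : Set ℝ) = Icc (-1) 1 ∪ (Iio (-1) ∪ Ioi 1) := by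
    ext z; simp only [mem_univ, mem_union, mem_Icc, mem_Iio, mem_Ioi, true_iff]
    by_cases h1 : z < -1
    · tauto
    · by_cases h2 : 1 < z
      · tauto
      · left; constructor <;> linarith [not_lt.mp h1, not_lt.mp h2]
  rw [← integrableOn_univ, huniv]
  exact hIcc.union (hIio.union hIoi)



end Helpers

open Set in
/-- nonlinear maximum principle — enhancement of dissipation by
small amplitudes: `D_α u'(x) ≥ c₁ |u'(x)|^{2+α} / V^α`, with `c₁` depending only on `α`. -/
theorem nonlinear_max_principle
    (α : ℝ) (hα₀ : 0 < α) (hα₁ : α < 1) :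
    ∃ c₁ : ℝ, 0 < c₁ ∧
      ∀ (u : ℝ → ℝ) (V : ℝ),
        ContDiff ℝ 2 u → Function.Periodic u (2 * π) →
        (¬ ∃ a : ℝ, ∀ x, u x = a) →
        V = sSup (Set.range u) - sInf (Set.range u) → 0 < V →
        ∀ x : ℝ, c₁ * |deriv u x| ^ (2 + α) / V ^ α ≤ dissip α (deriv u) x := by
  refine ⟨1/4, by norm_num, ?_⟩
  intro u V hu hper _ hVdef hV x
  unfold dissip
  set f := deriv u with hfdef
  have h1α : (0:ℝ) < 1 + α := by linarith
  have hud : Differentiable ℝ u := hu.differentiable (by norm_num)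
  have hfc : Continuous f := hu.continuous_deriv (by norm_num)
  have hfd : Differentiable ℝ f := by
    have h := (contDiff_succ_iff_deriv (n := 1)).mp (by exact_mod_cast hu)
    exact h.2.2.differentiable (by norm_num)
  have hf2c : Continuous (deriv f) := by
    have h := (contDiff_succ_iff_deriv (n := 1)).mp (by exact_mod_cast hu)
    exact h.2.2.continuous_deriv le_rfl
  have hfper : Function.Periodic f (2*π) := per_deriv hper
  have hf2per : Function.Periodic (deriv f) (2*π) := per_deriv hfper
  -- bounds
  obtain ⟨Cb, hCb0, hCb⟩ := bdd_per hfc hfper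
  obtain ⟨L, hL0, hL⟩ := bdd_per hf2c hf2per
  -- Lipschitz bound for f
  have hlip : ∀ a b : ℝ, |f a - f b| ≤ L * |a - b| := by
    intro a b
    have hlw : LipschitzWith L.toNNReal f := by
      apply lipschitzWith_of_nnnorm_deriv_le hfd
      intro y
      rw [← NNReal.coe_le_coe, coe_nnnorm, Real.coe_toNNReal _ hL0, Real.norm_eq_abs]
      exact hL y
    have := hlw.dist_le_mul a b
    rwa [Real.dist_eq, Real.dist_eq, Real.coe_toNNReal _ hL0] at this
  -- amplitude bound
  have hamp : ∀ a b : ℝ, |u a - u b| ≤ V := by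
    intro a b
    have h1 := amp_bound hud.continuous hper a b
    have h2 := amp_bound hud.continuous hper b a
    rw [← hVdef] at h1 h2
    rw [abs_le]; constructor <;> linarith
  set M := f x with hM
  rcases eq_or_ne M 0 with hM0 | hM0
  · -- trivial case
    rw [hM0]
    have : |(0:ℝ)| ^ (2+α) = 0 := by
      rw [abs_zero]; exact Real.zero_rpow (by positivity)
    rw [this, mul_zero, zero_div]
    exact integral_nonneg fun z =>
      div_nonneg (sq_nonneg _) (Real.rpow_nonneg (abs_nonneg z) _)
  · have hMpos : 0 < |M| := abs_pos.2 hM0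
    set R : ℝ := 2 * V / |M| with hRdef
    have hR : 0 < R := by positivity
    set g : ℝ → ℝ := fun z => M - f (x + z) with hg
    have hgc : Continuous g := continuous_const.sub (hfc.comp (continuous_const.add continuous_id))
    -- Step A : FTC
    have hA : ∫ z in (0:ℝ)..R, f (x + z) = u (x + R) - u x := by
      have h1 : ∫ z in (0:ℝ)..R, f (x + z) = ∫ y in (x+0)..(x+R), f y :=
        intervalIntegral.integral_comp_add_left f x
      rw [h1, add_zero]
      exact intervalIntegral.integral_deriv_eq_sub (fun y _ => hud y)
        (hfc.intervalIntegrable _ _)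
    -- Step B
    have hB : ∫ z in (0:ℝ)..R, g z = R * M - (u (x + R) - u x) := by
      have h1 : IntervalIntegrable (fun z => f (x + z)) volume 0 R :=
        (hfc.comp (continuous_add_left x)).intervalIntegrable _ _
      calc ∫ z in (0:ℝ)..R, g z = ∫ z in (0:ℝ)..R, (M - f (x + z)) := rfl
        _ = (∫ _ in (0:ℝ)..R, M) - ∫ z in (0:ℝ)..R, f (x + z) :=
            intervalIntegral.integral_sub intervalIntegrable_const h1
        _ = R * M - (u (x + R) - u x) := by
            rw [hA, intervalIntegral.integral_const]; simp [smul_eq_mul]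
    -- Step C
    have hRM : R * |M| = 2 * V := by
      rw [hRdef]; field_simp
    have hC : V ≤ |∫ z in (0:ℝ)..R, g z| := by
      rw [hB]
      have h1 : |R * M| = 2 * V := by rw [abs_mul, abs_of_pos hR, hRM]
      have h2 := abs_sub_abs_le_abs_sub (R * M) (u (x + R) - u x)
      have h3 := hamp (x + R) x
      linarith
    -- Step D
    have hD : |∫ z in (0:ℝ)..R, g z| ≤ ∫ z in (0:ℝ)..R, |g z| :=
      intervalIntegral.abs_integral_le_integral_abs hR.le
    have hE : ∫ z in (0:ℝ)..R, |g z| = ∫ z in Ioc 0 R, |g z| :=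
      intervalIntegral.integral_of_le hR.le
    -- the epsilon
    set ε : ℝ := (2 + α) * V / R ^ (2 + α) with hεdef
    have hRpow_pos : 0 < R ^ (2+α) := Real.rpow_pos_of_pos hR _
    have hε : 0 < ε := by positivity
    set ψ : ℝ → ℝ := fun z => g z ^ 2 / z ^ (1+α) with hψ
    set φ : ℝ → ℝ := fun z => g z ^ 2 / (2 * ε * z ^ (1+α)) with hφ
    set χ : ℝ → ℝ := fun z => ε / 2 * z ^ (1+α) with hχ
    -- integrabilities on Ioc 0 R
    have hgIoc : IntegrableOn (fun z => |g z|) (Ioc 0 R) := hgc.abs.integrableOn_Ioc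
    have hψmeas : Measurable ψ :=
      (hgc.measurable.pow_const 2).div
        (continuous_id.rpow_const (fun _ => Or.inr h1α.le)).measurable
    have hφmeas : Measurable φ :=
      (hgc.measurable.pow_const 2).div
        (measurable_const.mul (continuous_id.rpow_const (fun _ => Or.inr h1α.le)).measurable)
    have hgLip : ∀ z ∈ Ioc (0:ℝ) R, |g z| ≤ L * z := by
      intro z hz
      have := hlip x (x + z)
      have h2 : |x - (x + z)| = |z| := by rw [show x - (x+z) = -z by ring, abs_neg]
      rw [h2, abs_of_pos hz.1] at this
      exact this
    have hφbound : ∀ z ∈ Ioc (0:ℝ) R, φ z ≤ L^2 / (2*ε) * R ^ (1-α) := by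
      intro z hz
      have hzpos := hz.1
      have hzR := hz.2
      have hzw : (0:ℝ) < z ^ (1+α) := Real.rpow_pos_of_pos hzpos _
      have h1 : g z ^ 2 ≤ (L * z)^2 := by
        calc g z ^ 2 = |g z| ^ 2 := (sq_abs _).symm
          _ ≤ (L * z)^2 := pow_le_pow_left₀ (abs_nonneg _) (hgLip z hz) 2
      have h2 : φ z ≤ (L * z)^2 / (2 * ε * z ^ (1+α)) :=
        div_le_div_of_nonneg_right h1 (by positivity)
      have hzz : z ^ (1-α) * z ^ (1+α) = z ^ 2 := by
        rw [← Real.rpow_add hzpos, show (1-α)+(1+α) = (2:ℝ) by ring, Real.rpow_two]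
      have h3 : (L * z)^2 / (2 * ε * z ^ (1+α)) = L^2/(2*ε) * z ^ (1-α) := by
        rw [mul_pow, ← hzz]
        have hw : z ^ (1+α) ≠ 0 := (Real.rpow_pos_of_pos hzpos _).ne'
        field_simp
      have h5 : z ^ (1-α) ≤ R ^ (1-α) :=
        Real.rpow_le_rpow hzpos.le hzR (by linarith)
      calc φ z ≤ L^2/(2*ε) * z ^ (1-α) := h3 ▸ h2
        _ ≤ L^2/(2*ε) * R ^ (1-α) := by
            apply mul_le_mul_of_nonneg_left h5 (by positivity)
    have hφnonneg : ∀ z ∈ Ioc (0:ℝ) R, 0 ≤ φ z := by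
      intro z hz
      have : (0:ℝ) < z ^ (1+α) := Real.rpow_pos_of_pos hz.1 _
      positivity
    have hφint : IntegrableOn φ (Ioc 0 R) := by
      refine Integrable.mono' (g := fun _ => L^2/(2*ε) * R ^ (1-α))
        ((integrableOn_const_iff).mpr (Or.inr measure_Ioc_lt_top))
        hφmeas.aestronglyMeasurable.restrict ?_
      refine (ae_restrict_iff' measurableSet_Ioc).mpr (ae_of_all _ fun z hz => ?_)
      rw [Real.norm_eq_abs, abs_of_nonneg (hφnonneg z hz)]
      exact hφbound z hz
    have hχii : IntervalIntegrable (fun z : ℝ => z ^ (1+α)) volume 0 R :=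
      intervalIntegral.intervalIntegrable_rpow (Or.inl h1α.le)
    have hχint : IntegrableOn χ (Ioc 0 R) := by
      have := (hχii.1).const_mul (ε/2)
      exact this
    -- pointwise AM-GM
    have hAM : ∀ z ∈ Ioc (0:ℝ) R, |g z| ≤ φ z + χ z := by
      intro z hz
      have hw : (0:ℝ) < z ^ (1+α) := Real.rpow_pos_of_pos hz.1 _
      set w := z ^ (1+α)
      have hkey : |g z| * (2 * ε * w) ≤ g z ^ 2 + ε^2 * w^2 := by
        nlinarith [sq_nonneg (|g z| - ε * w), sq_abs (g z), hε, hw]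
      have hsum : φ z + χ z = (g z ^ 2 + ε^2 * w^2) / (2 * ε * w) := by
        rw [hφ, hχ]; show g z ^ 2 / (2 * ε * w) + ε / 2 * w = _; field_simp
      rw [hsum, le_div_iff₀ (by positivity)]
      exact hkey
    -- Step F : integral inequality
    have hF : ∫ z in Ioc (0:ℝ) R, |g z| ≤ (∫ z in Ioc (0:ℝ) R, φ z) + ∫ z in Ioc (0:ℝ) R, χ z := by
      rw [← integral_add hφint hχint]
      exact setIntegral_mono_on hgIoc (hφint.add hχint) measurableSet_Ioc hAM
    -- χ integral value
    have hχval : ∫ z in Ioc (0:ℝ) R, χ z = V / 2 := by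
      rw [← intervalIntegral.integral_of_le hR.le]
      rw [show (∫ z in (0:ℝ)..R, χ z) = ∫ z in (0:ℝ)..R, (ε/2) * z ^ (1+α) from rfl]
      rw [intervalIntegral.integral_const_mul, integral_rpow (Or.inl (by linarith))]
      rw [Real.zero_rpow (by positivity), show (1+α)+1 = 2+α by ring]
      rw [hεdef]
      field_simp
      ring
    -- φ integral in terms of ψ
    have hφψ : ∫ z in Ioc (0:ℝ) R, φ z = 1/(2*ε) * ∫ z in Ioc (0:ℝ) R, ψ z := by
      rw [← integral_const_mul]
      apply setIntegral_congr_fun measurableSet_Ioc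
      have hkey : ∀ a b c : ℝ, a/(b*c) = 1/b * (a/c) := by
        intro a b c; rw [one_div, inv_mul_eq_div, div_div, mul_comm c b]
      intro z _
      exact hkey _ _ _
    -- connect ψ with the dissipation integrand
    set F : ℝ → ℝ := fun z => (f x - f (x + z)) ^ 2 / |z| ^ (1+α) with hFdef
    have hFint : Integrable F := by
      have hk : Continuous (fun z => f (x + z)) := hfc.comp (continuous_const.add continuous_id)
      have h := dissip_integrable α hα₀ hα₁ hk (C := Cb) (L := L)
        (fun y => hCb (x + y))
        (fun z => by
          have := hlip (x + 0) (x + z)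
          have h2 : |x + 0 - (x + z)| = |z| := by
            rw [show x + 0 - (x+z) = -z by ring, abs_neg]
          rwa [h2] at this)
      simpa [add_zero] using h
    have hFnonneg : ∀ z, 0 ≤ F z := fun z =>
      div_nonneg (sq_nonneg _) (Real.rpow_nonneg (abs_nonneg z) _)
    have hψF : ∫ z in Ioc (0:ℝ) R, ψ z = ∫ z in Ioc (0:ℝ) R, F z := by
      apply setIntegral_congr_fun measurableSet_Ioc
      intro z hz
      rw [hψ, hFdef]
      simp only
      rw [abs_of_pos hz.1]
    have hJD : ∫ z in Ioc (0:ℝ) R, ψ z ≤ ∫ z, F z := by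
      rw [hψF]
      exact setIntegral_le_integral hFint (ae_of_all _ hFnonneg)
    -- put together : V ≤ 1/(2ε) J + V/2
    set J := ∫ z in Ioc (0:ℝ) R, ψ z with hJ
    have hchain : V ≤ 1/(2*ε) * J + V/2 := by
      calc V ≤ |∫ z in (0:ℝ)..R, g z| := hC
        _ ≤ ∫ z in (0:ℝ)..R, |g z| := hD
        _ = ∫ z in Ioc 0 R, |g z| := hE
        _ ≤ (∫ z in Ioc (0:ℝ) R, φ z) + ∫ z in Ioc (0:ℝ) R, χ z := hF
        _ = 1/(2*ε) * J + V/2 := by rw [hφψ, hχval]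
    have hJlow : ε * V ≤ J := by
      have h1 : V/2 ≤ 1/(2*ε) * J := by linarith
      have h2 := mul_le_mul_of_nonneg_left h1 (le_of_lt (show (0:ℝ) < 2*ε by positivity))
      have h3 : 2*ε * (1/(2*ε) * J) = J := by field_simp
      rw [h3] at h2
      linarith [h2]
    -- final arithmetic
    have hεV : ε * V = (2+α) * V^2 / R ^ (2+α) := by
      rw [hεdef]; field_simp
    have hDfinal : (2+α) * V^2 / R ^ (2+α) ≤ ∫ z, F z := by
      rw [← hεV]
      exact le_trans hJlow hJD
    -- compute R^(2+α)
    have hRpow : R ^ (2+α) = 2^(2+α) * V^(2+α) / |M| ^ (2+α) := by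
      rw [hRdef, Real.div_rpow (by positivity) (by positivity),
        Real.mul_rpow (by norm_num) hV.le]
    have hVpow : V ^ ((2:ℝ)+α) = V^2 * V^α := by
      rw [Real.rpow_add hV, Real.rpow_two]
    have hMpow_pos : 0 < |M| ^ (2+α) := Real.rpow_pos_of_pos hMpos _
    have hVα : (0:ℝ) < V^α := Real.rpow_pos_of_pos hV _
    have h2pow : (0:ℝ) < 2^(2+α) := Real.rpow_pos_of_pos (by norm_num) _
    have h2pow8 : (2:ℝ)^(2+α) ≤ 8 := by
      calc (2:ℝ)^(2+α) ≤ 2^(3:ℝ) := Real.rpow_le_rpow_of_exponent_le (by norm_num) (by linarith)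
        _ = 8 := by
          rw [show (3:ℝ) = ((3:ℕ):ℝ) by norm_num, Real.rpow_natCast]; norm_num
    have hkey2 : ∀ (c P A W v : ℝ), 0 < P → 0 < A → 0 < W → 0 < v →
        c * v^2 / (P * (v^2 * W) / A) = c/P * (A/W) := by
      intro c P A W v hP hA hW hv
      field_simp
    have hRHS : (2+α) * V^2 / R ^ (2+α) = (2+α)/2^(2+α) * (|M| ^ (2+α) / V^α) := by
      rw [hRpow, hVpow]
      exact hkey2 _ _ _ _ _ h2pow hMpow_pos hVα hV
    have hfinal : 1/4 * |M| ^ (2+α) / V^α ≤ (2+α) * V^2 / R ^ (2+α) := by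
      rw [hRHS]
      have h1 : (1:ℝ)/4 ≤ (2+α)/2^(2+α) := by
        rw [div_le_div_iff₀ (by norm_num) h2pow]
        linarith [h2pow8]
      have h2 : (0:ℝ) ≤ |M| ^ (2+α) / V^α := div_nonneg hMpow_pos.le hVα.le
      calc 1/4 * |M| ^ (2+α) / V^α = 1/4 * (|M| ^ (2+α) / V^α) := mul_div_assoc _ _ _
        _ ≤ (2+α)/2^(2+α) * (|M| ^ (2+α) / V^α) := mul_le_mul_of_nonneg_right h1 h2
    calc 1/4 * |M| ^ (2+α) / V^α ≤ (2+α) * V^2 / R ^ (2+α) := hfinal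
      _ ≤ ∫ z, F z := hDfinal
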